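/- Let r ≥ 2 and n = r + 1. Then H_S is invertible over ℚ and its r×r blocks are: (H_S⁻¹)_{αα} = 0 for all α; (H_S⁻¹)_{αβ} = ½·(S_r^(β−α+1) − S_r^(β−α)) for α > β; and (H_S⁻¹)_{αβ} = ½·(S_r^(β−α) − S_r^(β−α−1)) for α < β, where negative powers are defined by S_r^(−k) = (S_rᵗ)^k = (S_r⁻¹)^k. -/

import Mathlib

open Matrix Finset

/-- for `n = r+1`, `H_S` is invertible and its `r×r` blocks are
`(H_S⁻¹)_{αα} = 0`, `(H_S⁻¹)_{αβ} = ½(S^(β-α+1) - S^(β-α))` for `α > β`, and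
`(H_S⁻¹)_{αβ} = ½(S^(β-α) - S^(β-α-1))` for `α < β`, where negative powers are
`S^(-k) = (Sᵗ)^k` (for `α > β` the exponents `β-α+1 = -(α-β-1)` and
`β-α = -(α-β)` are negative or zero). -/
private lemma sum_indicator13 {r : ℕ} (t : ℕ) (ht : t < r) (c : ℚ) (f : Fin r → ℚ) :
    ∑ k : Fin r, (if (k : ℕ) = t then c else 0) * f k = c * f ⟨t, ht⟩ := by
  have h : ∀ k : Fin r, (if (k : ℕ) = t then c else 0) * f k
      = if k = ⟨t, ht⟩ then c * f ⟨t, ht⟩ else 0 := by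
    intro k
    rcases eq_or_ne k (⟨t, ht⟩ : Fin r) with h | h
    · subst h; simp
    · have : (k : ℕ) ≠ t := fun hc => h (Fin.ext hc)
      simp [h, this]
  rw [Finset.sum_congr rfl fun k _ => h k, Finset.sum_ite_eq']
  simp

private lemma aux_row13 {r : ℕ} (hr : 2 ≤ r) (Sr : Matrix (Fin r) (Fin r) ℚ)
    (hSr : ∀ i j : Fin r, Sr i j =
      if (i : ℕ) + 1 = (j : ℕ) then 1
      else if (i : ℕ) = r - 1 ∧ (j : ℕ) = 0 then -1 else 0) (i k : Fin r) :
    Sr i k = if (k : ℕ) = ((i : ℕ) + 1) % r then (if (i : ℕ) + 1 < r then 1 else -1) else 0 := by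
  have hk := k.isLt
  have hi := i.isLt
  have hm : ((i : ℕ) + 1) % r = if (i : ℕ) + 1 < r then (i : ℕ) + 1 else 0 := by
    split_ifs with h
    · exact Nat.mod_eq_of_lt h
    · have : (i : ℕ) + 1 = r := by omega
      simp [this]
  rw [hSr, hm]
  split_ifs <;> first | rfl | (exfalso; omega)

private lemma aux_col13 {r : ℕ} (hr : 2 ≤ r) (Sr : Matrix (Fin r) (Fin r) ℚ)
    (hSr : ∀ i j : Fin r, Sr i j =
      if (i : ℕ) + 1 = (j : ℕ) then 1
      else if (i : ℕ) = r - 1 ∧ (j : ℕ) = 0 then -1 else 0) (k j : Fin r) :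
    Sr k j = if (k : ℕ) = ((j : ℕ) + (r - 1)) % r then (if 1 ≤ (j : ℕ) then 1 else -1) else 0 := by
  have hk := k.isLt
  have hj := j.isLt
  have hm : ((j : ℕ) + (r - 1)) % r = if 1 ≤ (j : ℕ) then (j : ℕ) - 1 else r - 1 := by
    split_ifs with h
    · rw [Nat.mod_eq_sub_mod (by omega), Nat.mod_eq_of_lt (by omega)]
      omega
    · rw [Nat.mod_eq_of_lt (by omega)]
      omega
  rw [hSr, hm]
  split_ifs <;> first | rfl | (exfalso; omega)

private lemma aux_mulT13 {r : ℕ} (hr : 2 ≤ r) (Sr : Matrix (Fin r) (Fin r) ℚ)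
    (hSr : ∀ i j : Fin r, Sr i j =
      if (i : ℕ) + 1 = (j : ℕ) then 1
      else if (i : ℕ) = r - 1 ∧ (j : ℕ) = 0 then -1 else 0) : Sr * Srᵀ = 1 := by
  ext i j
  have hi := i.isLt
  have hj := j.isLt
  rw [mul_apply, one_apply]
  have h1 : ∀ k : Fin r, Sr i k * Srᵀ k j
      = (if (k : ℕ) = ((i : ℕ) + 1) % r then (if (i : ℕ) + 1 < r then (1:ℚ) else -1) else 0) * Sr j k := by
    intro k; rw [transpose_apply, aux_row13 hr Sr hSr i k]
  rw [Finset.sum_congr rfl fun k _ => h1 k,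
    sum_indicator13 _ (Nat.mod_lt _ (by omega)) _ _,
    aux_row13 hr Sr hSr j ⟨((i : ℕ) + 1) % r, Nat.mod_lt _ (by omega)⟩]
  rcases eq_or_ne i j with h | h
  · subst h
    simp only [if_pos rfl]
    split_ifs <;> norm_num
  · have hij : (i : ℕ) ≠ (j : ℕ) := fun hc => h (Fin.ext hc)
    have hmi : ((i : ℕ) + 1) % r = if (i : ℕ) + 1 < r then (i : ℕ) + 1 else 0 := by
      split_ifs with h'
      · exact Nat.mod_eq_of_lt h'
      · have h2 : (i : ℕ) + 1 = r := by omega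
        simp [h2]
    have hmj : ((j : ℕ) + 1) % r = if (j : ℕ) + 1 < r then (j : ℕ) + 1 else 0 := by
      split_ifs with h'
      · exact Nat.mod_eq_of_lt h'
      · have h2 : (j : ℕ) + 1 = r := by omega
        simp [h2]
    have hne : ¬ ((((i : ℕ) + 1) % r : ℕ) = ((j : ℕ) + 1) % r) := by
      intro hc
      rw [hmi, hmj] at hc
      split_ifs at hc <;> omega
    simp [h, hne]

private lemma aux_pow13 {r : ℕ} (hr : 2 ≤ r) (Sr : Matrix (Fin r) (Fin r) ℚ)
    (hSr : ∀ i j : Fin r, Sr i j =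
      if (i : ℕ) + 1 = (j : ℕ) then 1
      else if (i : ℕ) = r - 1 ∧ (j : ℕ) = 0 then -1 else 0) :
    ∀ m, m ≤ r → ∀ i j : Fin r, (Sr ^ m) i j =
      if (i : ℕ) + m = (j : ℕ) then 1
      else if (i : ℕ) + m = r + (j : ℕ) then -1 else 0 := by
  intro m
  induction m with
  | zero =>
    intro _ i j
    have hi := i.isLt
    have hj := j.isLt
    rw [pow_zero, one_apply]
    split_ifs <;> first | rfl | (exfalso; omega)
  | succ m ih =>
    intro hm i j
    have hi := i.isLt
    have hj := j.isLt
    have hmi : ((i : ℕ) + 1) % r = if (i : ℕ) + 1 < r then (i : ℕ) + 1 else 0 := by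
      split_ifs with h'
      · exact Nat.mod_eq_of_lt h'
      · have h2 : (i : ℕ) + 1 = r := by omega
        simp [h2]
    rw [pow_succ', mul_apply]
    have h1 : ∀ k : Fin r, Sr i k * (Sr ^ m) k j
        = (if (k : ℕ) = ((i : ℕ) + 1) % r then (if (i : ℕ) + 1 < r then (1:ℚ) else -1) else 0) * (Sr ^ m) k j := by
      intro k; rw [aux_row13 hr Sr hSr i k]
    rw [Finset.sum_congr rfl fun k _ => h1 k,
      sum_indicator13 _ (Nat.mod_lt _ (by omega)) _ _,
      ih (by omega) ⟨((i : ℕ) + 1) % r, Nat.mod_lt _ (by omega)⟩ j]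
    simp only [hmi]
    split_ifs <;> (first | (exfalso; omega) | norm_num)

private lemma aux_powr13 {r : ℕ} (hr : 2 ≤ r) (Sr : Matrix (Fin r) (Fin r) ℚ)
    (hpow : ∀ m, m ≤ r → ∀ i j : Fin r, (Sr ^ m) i j =
      if (i : ℕ) + m = (j : ℕ) then 1
      else if (i : ℕ) + m = r + (j : ℕ) then -1 else 0) :
    Sr ^ r = -1 := by
  ext i j
  have hi := i.isLt
  have hj := j.isLt
  rw [hpow r le_rfl i j, neg_apply, one_apply]
  rcases eq_or_ne i j with h | h
  · subst h; rw [if_neg (by omega), if_pos (by omega), if_pos rfl]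
  · have : (i : ℕ) ≠ (j : ℕ) := fun hc => h (Fin.ext hc)
    rw [if_neg (by omega), if_neg (by omega), if_neg h]
    norm_num

private lemma aux_cancel13 {r : ℕ} (Sr : Matrix (Fin r) (Fin r) ℚ)
    (h1 : Sr * Srᵀ = 1) : ∀ a, Sr ^ a * Srᵀ ^ a = 1 := by
  intro a
  induction a with
  | zero => simp
  | succ a ih =>
    rw [pow_succ, pow_succ', mul_assoc, ← mul_assoc Sr, h1, one_mul, ih]

private lemma aux_T13 {r : ℕ} (Sr : Matrix (Fin r) (Fin r) ℚ)
    (h1 : Sr * Srᵀ = 1) (hR : Sr ^ r = -1) :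
    ∀ k, k ≤ r → Srᵀ ^ (r - k) = -Sr ^ k := by
  intro k hk
  have hc := aux_cancel13 Sr h1 (r - k)
  have h2 : (-Sr ^ k) * Sr ^ (r - k) = 1 := by
    rw [neg_mul, ← pow_add, Nat.add_sub_cancel' hk, hR, neg_neg]
  calc Srᵀ ^ (r - k) = 1 * Srᵀ ^ (r - k) := (one_mul _).symm
    _ = ((-Sr ^ k) * Sr ^ (r - k)) * Srᵀ ^ (r - k) := by rw [h2]
    _ = (-Sr ^ k) * (Sr ^ (r - k) * Srᵀ ^ (r - k)) := by rw [mul_assoc]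
    _ = -Sr ^ k := by rw [hc, mul_one]

private lemma aux_A13 {r : ℕ} (Mr Nr : Matrix (Fin r) (Fin r) ℚ)
    (hNr : ∀ i j : Fin r, Nr i j = if i ≤ j then -1 else 0) (hMr : Mr = -Nrᵀ) :
    ∀ i j : Fin r, (Mr + Nr) i j
      = if (j : ℕ) < (i : ℕ) then 1 else if (i : ℕ) < (j : ℕ) then -1 else 0 := by
  intro i j
  have h : (Mr + Nr) i j = -(Nr j i) + Nr i j := by
    rw [Matrix.add_apply, hMr]; simp
  rw [h, hNr, hNr]
  split_ifs <;> (first | (exfalso; omega) | norm_num)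

private lemma aux_key113 {r : ℕ} (hr : 2 ≤ r) (Sr Mr Nr : Matrix (Fin r) (Fin r) ℚ)
    (hcol : ∀ k j : Fin r, Sr k j =
      if (k : ℕ) = ((j : ℕ) + (r - 1)) % r then (if 1 ≤ (j : ℕ) then 1 else -1) else 0)
    (hA : ∀ i j : Fin r, (Mr + Nr) i j =
      if (j : ℕ) < (i : ℕ) then 1 else if (i : ℕ) < (j : ℕ) then -1 else 0) :
    (Mr + Nr) * (Sr - 1) = 1 + Sr := by
  ext i j
  have hi := i.isLt
  have hj := j.isLt
  have hm : ((j : ℕ) + (r - 1)) % r = if 1 ≤ (j : ℕ) then (j : ℕ) - 1 else r - 1 := by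
    split_ifs with h
    · rw [Nat.mod_eq_sub_mod (by omega), Nat.mod_eq_of_lt (by omega)]
      omega
    · rw [Nat.mod_eq_of_lt (by omega)]
      omega
  have expand : ((Mr + Nr) * (Sr - 1)) i j = (∑ k, (Mr + Nr) i k * Sr k j) - (Mr + Nr) i j := by
    rw [Matrix.mul_sub, Matrix.mul_one, Matrix.sub_apply, mul_apply]
  have hsum : (∑ k, (Mr + Nr) i k * Sr k j)
      = (if 1 ≤ (j : ℕ) then (1:ℚ) else -1) *
        (Mr + Nr) i ⟨((j : ℕ) + (r - 1)) % r, Nat.mod_lt _ (by omega)⟩ := by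
    have h1 : ∀ k : Fin r, (Mr + Nr) i k * Sr k j
        = (if (k : ℕ) = ((j : ℕ) + (r - 1)) % r then (if 1 ≤ (j : ℕ) then (1:ℚ) else -1) else 0)
          * (Mr + Nr) i k := by
      intro k; rw [hcol k j]; ring
    rw [Finset.sum_congr rfl fun k _ => h1 k, sum_indicator13 _ (Nat.mod_lt _ (by omega)) _ _]
  rw [expand, hsum, hA, hA, Matrix.add_apply, one_apply, hcol i j]
  simp only [hm]
  split_ifs <;> (first | (exfalso; omega) | norm_num)

private lemma aux_key213 {r : ℕ} (Sr Mr Nr : Matrix (Fin r) (Fin r) ℚ)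
    (h1 : Sr * Srᵀ = 1) (hk : (Mr + Nr) * (Sr - 1) = 1 + Sr) :
    (Mr + Nr) * (1 - Srᵀ) = 1 + Srᵀ := by
  have h2 : (Sr - 1) * Srᵀ = 1 - Srᵀ := by rw [sub_mul, one_mul, h1]
  have h3 : (1 + Sr) * Srᵀ = 1 + Srᵀ := by rw [add_mul, one_mul, h1, add_comm]
  calc (Mr + Nr) * (1 - Srᵀ) = (Mr + Nr) * ((Sr - 1) * Srᵀ) := by rw [h2]
    _ = ((Mr + Nr) * (Sr - 1)) * Srᵀ := (mul_assoc _ _ _).symm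
    _ = (1 + Sr) * Srᵀ := by rw [hk]
    _ = 1 + Srᵀ := h3

private lemma keyS13 {r : ℕ} (Sr Mr Nr : Matrix (Fin r) (Fin r) ℚ)
    (hk : (Mr + Nr) * (Sr - 1) = 1 + Sr) :
    ∀ d, 1 ≤ d → (Mr + Nr) * (Sr ^ d - Sr ^ (d - 1)) = Sr ^ (d - 1) + Sr ^ d := by
  intro d hd
  obtain ⟨e, rfl⟩ : ∃ e, d = e + 1 := ⟨d - 1, by omega⟩
  simp only [Nat.add_sub_cancel]
  have h2 : Sr ^ (e + 1) - Sr ^ e = (Sr - 1) * Sr ^ e := by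
    rw [sub_mul, one_mul, ← pow_succ']
  rw [h2, ← mul_assoc, hk, add_mul, one_mul, ← pow_succ']

private lemma keyT13 {r : ℕ} (Sr Mr Nr : Matrix (Fin r) (Fin r) ℚ)
    (hk : (Mr + Nr) * (1 - Srᵀ) = 1 + Srᵀ) :
    ∀ e, 1 ≤ e → (Mr + Nr) * (Srᵀ ^ (e - 1) - Srᵀ ^ e) = Srᵀ ^ (e - 1) + Srᵀ ^ e := by
  intro e he
  obtain ⟨f, rfl⟩ : ∃ f, e = f + 1 := ⟨e - 1, by omega⟩
  simp only [Nat.add_sub_cancel]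
  have h2 : Srᵀ ^ f - Srᵀ ^ (f + 1) = (1 - Srᵀ) * Srᵀ ^ f := by
    rw [sub_mul, one_mul, ← pow_succ']
  rw [h2, ← mul_assoc, hk, add_mul, one_mul, ← pow_succ']

def gf13 {r : ℕ} (Sr : Matrix (Fin r) (Fin r) ℚ) (c m : ℕ) : Matrix (Fin r) (Fin r) ℚ :=
  if m ≤ c then Sr ^ (c - m) else Srᵀ ^ (m - c)

def bbf13 {r : ℕ} (Sr : Matrix (Fin r) (Fin r) ℚ) (m c : ℕ) : Matrix (Fin r) (Fin r) ℚ :=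
  if m = c then 0 else if m < c then (1/2 : ℚ) • (Sr ^ (c - m) - Sr ^ (c - m - 1))
  else (1/2 : ℚ) • (Srᵀ ^ (m - c - 1) - Srᵀ ^ (m - c))

def hbf13 {r : ℕ} (Mr Nr : Matrix (Fin r) (Fin r) ℚ) (a m : ℕ) : Matrix (Fin r) (Fin r) ℚ :=
  if m = a then -(Mr + Nr) else if a < m then 1 else -1

section
variable {r : ℕ} (Sr : Matrix (Fin r) (Fin r) ℚ)

private lemma tele13 (G : ℕ → Matrix (Fin r) (Fin r) ℚ) (s t : ℕ) (h : s ≤ t) :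
    ∑ m ∈ Finset.Ico s t, (G m - G (m + 1)) = G s - G t := by
  rw [Finset.sum_Ico_eq_sum_range]
  have h2 : ∀ i ∈ Finset.range (t - s), G (s + i) - G (s + i + 1)
      = (fun i => G (s + i)) i - (fun i => G (s + i)) (i + 1) := by
    intro i _
    simp only []
    rw [Nat.add_assoc]
  rw [Finset.sum_congr rfl h2, Finset.sum_range_sub' (fun i => G (s + i)) (t - s)]
  rw [Nat.add_zero, Nat.add_sub_cancel' h]

private lemma teleS13 (q : ℚ) (G : ℕ → Matrix (Fin r) (Fin r) ℚ) (s t : ℕ) (h : s ≤ t) :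
    ∑ m ∈ Finset.Ico s t, q • (G m - G (m + 1)) = q • (G s - G t) := by
  rw [← Finset.smul_sum, tele13 _ _ _ h]

private lemma tele2S13 (q : ℚ) (G : ℕ → Matrix (Fin r) (Fin r) ℚ) (s t : ℕ) (h : s ≤ t) :
    ∑ m ∈ Finset.Ico s t, q • (G (m - 1) - G m) = q • (G (s - 1) - G (t - 1)) := by
  have := teleS13 q (fun m => G (m - 1)) s t h
  simp only [Nat.add_sub_cancel] at this
  exact this

private lemma split213 (f : ℕ → Matrix (Fin r) (Fin r) ℚ) (u w : ℕ) (h : u < w) :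
    ∑ m ∈ Finset.range w, f m
      = (∑ m ∈ Finset.Ico 0 u, f m) + f u + ∑ m ∈ Finset.Ico (u + 1) w, f m := by
  rw [Finset.range_eq_Ico, ← Finset.sum_Ico_consecutive _ (Nat.zero_le u) (by omega : u ≤ w),
    Finset.sum_eq_sum_Ico_succ_bot h]
  rw [add_assoc]

private lemma split313 (f : ℕ → Matrix (Fin r) (Fin r) ℚ) (u v w : ℕ) (h1 : u < v) (h2 : v < w) :
    ∑ m ∈ Finset.range w, f m
      = (∑ m ∈ Finset.Ico 0 u, f m) + f u + (∑ m ∈ Finset.Ico (u + 1) v, f m) + f v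
        + ∑ m ∈ Finset.Ico (v + 1) w, f m := by
  rw [split213 _ _ _ (by omega : u < w),
    ← Finset.sum_Ico_consecutive _ (by omega : u + 1 ≤ v) (by omega : v ≤ w),
    Finset.sum_eq_sum_Ico_succ_bot (by omega : v < w)]
  abel

private lemma gf013 (c : ℕ) : gf13 Sr c 0 = Sr ^ c := by simp [gf13]

private lemma gfc13 (c : ℕ) : gf13 Sr c c = 1 := by simp [gf13]

private lemma gf_le13 {c m : ℕ} (h : m ≤ c) : gf13 Sr c m = Sr ^ (c - m) := by simp [gf13, h]

private lemma gf_ge13 {c m : ℕ} (h : c ≤ m) : gf13 Sr c m = Srᵀ ^ (m - c) := by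
  rcases eq_or_lt_of_le h with h' | h'
  · subst h'; simp [gf13]
  · simp [gf13, Nat.not_le.mpr h', le_of_lt]

private lemma gfr13 {c : ℕ} (hc : c ≤ r)
    (hR : Sr ^ r = -1) (hT : ∀ k, k ≤ r → Srᵀ ^ (r - k) = -Sr ^ k) :
    gf13 Sr c r = -Sr ^ c := by
  rcases eq_or_lt_of_le hc with h | h
  · subst h
    rw [gfc13, hR]
    norm_num
  · rw [gf_ge13 _ (le_of_lt h), hT c hc]

private lemma bbf_self13 (c : ℕ) : bbf13 Sr c c = 0 := by simp [bbf13]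

private lemma bbf_lt13 {m c : ℕ} (h : m < c) :
    bbf13 Sr m c = (1/2 : ℚ) • (gf13 Sr c m - gf13 Sr c (m + 1)) := by
  rw [bbf13, if_neg (by omega), if_pos h, gf_le13 _ (le_of_lt h),
    gf_le13 _ (by omega : m + 1 ≤ c)]
  congr 2

private lemma bbf_gt13 {m c : ℕ} (h : c < m) :
    bbf13 Sr m c = (1/2 : ℚ) • (gf13 Sr c (m - 1) - gf13 Sr c m) := by
  rw [bbf13, if_neg (by omega), if_neg (by omega), gf_ge13 _ (le_of_lt h),
    gf_ge13 _ (by omega : c ≤ m - 1)]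
  congr 3
  omega
end

private lemma mainsum13 {r : ℕ} (hr : 2 ≤ r) (Sr Mr Nr : Matrix (Fin r) (Fin r) ℚ)
    (hR : Sr ^ r = -1)
    (hT : ∀ k, k ≤ r → Srᵀ ^ (r - k) = -Sr ^ k)
    (hK1 : ∀ d, 1 ≤ d → (Mr + Nr) * (Sr ^ d - Sr ^ (d - 1)) = Sr ^ (d - 1) + Sr ^ d)
    (hK2 : ∀ e, 1 ≤ e → (Mr + Nr) * (Srᵀ ^ (e - 1) - Srᵀ ^ e) = Srᵀ ^ (e - 1) + Srᵀ ^ e)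
    (a c : ℕ) (ha : a ≤ r) (hc : c ≤ r) :
    ∑ m ∈ Finset.range (r + 1), hbf13 Mr Nr a m * bbf13 Sr m c
      = if a = c then 1 else 0 := by
  have hbf_lo : ∀ m, m < a → hbf13 Mr Nr a m = -1 := by
    intro m hm; rw [hbf13, if_neg (by omega), if_neg (by omega)]
  have hbf_hi : ∀ m, a < m → hbf13 Mr Nr a m = 1 := by
    intro m hm; rw [hbf13, if_neg (by omega), if_pos hm]
  have hbf_eq : hbf13 Mr Nr a a = -(Mr + Nr) := by rw [hbf13, if_pos rfl]
  rcases lt_trichotomy a c with hac | hac | hac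
  · rw [if_neg (by omega), split313 _ a c (r + 1) hac (by omega)]
    have e1 : ∀ m ∈ Finset.Ico 0 a, hbf13 Mr Nr a m * bbf13 Sr m c
        = (-(1/2 : ℚ)) • (gf13 Sr c m - gf13 Sr c (m + 1)) := by
      intro m hm; rw [Finset.mem_Ico] at hm
      rw [hbf_lo m (by omega), bbf_lt13 _ (by omega : m < c), neg_one_mul, ← neg_smul]
    have e3 : ∀ m ∈ Finset.Ico (a + 1) c, hbf13 Mr Nr a m * bbf13 Sr m c
        = (1/2 : ℚ) • (gf13 Sr c m - gf13 Sr c (m + 1)) := by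
      intro m hm; rw [Finset.mem_Ico] at hm
      rw [hbf_hi m (by omega), bbf_lt13 _ (by omega : m < c), one_mul]
    have e5 : ∀ m ∈ Finset.Ico (c + 1) (r + 1), hbf13 Mr Nr a m * bbf13 Sr m c
        = (1/2 : ℚ) • (gf13 Sr c (m - 1) - gf13 Sr c m) := by
      intro m hm; rw [Finset.mem_Ico] at hm
      rw [hbf_hi m (by omega), bbf_gt13 _ (by omega : c < m), one_mul]
    rw [Finset.sum_congr rfl e1, Finset.sum_congr rfl e3, Finset.sum_congr rfl e5,
      teleS13 _ _ _ _ (Nat.zero_le a), teleS13 _ _ _ _ (by omega : a + 1 ≤ c),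
      tele2S13 _ _ _ _ (by omega : c + 1 ≤ r + 1)]
    simp only [Nat.add_sub_cancel]
    have e2 : hbf13 Mr Nr a a * bbf13 Sr a c
        = (1/2 : ℚ) • (-(Sr ^ (c - a - 1) + Sr ^ (c - a))) := by
      rw [hbf_eq, bbf13, if_neg (by omega), if_pos hac, mul_smul_comm, neg_mul,
        hK1 (c - a) (by omega)]
    have e4 : hbf13 Mr Nr a c * bbf13 Sr c c = 0 := by rw [bbf_self13, mul_zero]
    rw [e2, e4, gf013, gfc13, gfr13 _ hc hR hT, gf_le13 _ (le_of_lt hac),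
      gf_le13 _ (by omega : a + 1 ≤ c)]
    have hx : c - (a + 1) = c - a - 1 := by omega
    rw [hx]
    module
  · subst hac
    rw [if_pos rfl, split213 _ a (r + 1) (by omega)]
    have e1 : ∀ m ∈ Finset.Ico 0 a, hbf13 Mr Nr a m * bbf13 Sr m a
        = (-(1/2 : ℚ)) • (gf13 Sr a m - gf13 Sr a (m + 1)) := by
      intro m hm; rw [Finset.mem_Ico] at hm
      rw [hbf_lo m (by omega), bbf_lt13 _ (by omega : m < a), neg_one_mul, ← neg_smul]
    have e3 : ∀ m ∈ Finset.Ico (a + 1) (r + 1), hbf13 Mr Nr a m * bbf13 Sr m a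
        = (1/2 : ℚ) • (gf13 Sr a (m - 1) - gf13 Sr a m) := by
      intro m hm; rw [Finset.mem_Ico] at hm
      rw [hbf_hi m (by omega), bbf_gt13 _ (by omega : a < m), one_mul]
    rw [Finset.sum_congr rfl e1, Finset.sum_congr rfl e3,
      teleS13 _ _ _ _ (Nat.zero_le a), tele2S13 _ _ _ _ (by omega : a + 1 ≤ r + 1)]
    simp only [Nat.add_sub_cancel]
    rw [bbf_self13, mul_zero, gf013, gfc13, gfr13 _ ha hR hT]
    module
  · rw [if_neg (by omega), split313 _ c a (r + 1) hac (by omega)]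
    have e1 : ∀ m ∈ Finset.Ico 0 c, hbf13 Mr Nr a m * bbf13 Sr m c
        = (-(1/2 : ℚ)) • (gf13 Sr c m - gf13 Sr c (m + 1)) := by
      intro m hm; rw [Finset.mem_Ico] at hm
      rw [hbf_lo m (by omega), bbf_lt13 _ (by omega : m < c), neg_one_mul, ← neg_smul]
    have e3 : ∀ m ∈ Finset.Ico (c + 1) a, hbf13 Mr Nr a m * bbf13 Sr m c
        = (-(1/2 : ℚ)) • (gf13 Sr c (m - 1) - gf13 Sr c m) := by
      intro m hm; rw [Finset.mem_Ico] at hm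
      rw [hbf_lo m (by omega), bbf_gt13 _ (by omega : c < m), neg_one_mul, ← neg_smul]
    have e5 : ∀ m ∈ Finset.Ico (a + 1) (r + 1), hbf13 Mr Nr a m * bbf13 Sr m c
        = (1/2 : ℚ) • (gf13 Sr c (m - 1) - gf13 Sr c m) := by
      intro m hm; rw [Finset.mem_Ico] at hm
      rw [hbf_hi m (by omega), bbf_gt13 _ (by omega : c < m), one_mul]
    rw [Finset.sum_congr rfl e1, Finset.sum_congr rfl e3, Finset.sum_congr rfl e5,
      teleS13 _ _ _ _ (Nat.zero_le c), tele2S13 _ _ _ _ (by omega : c + 1 ≤ a),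
      tele2S13 _ _ _ _ (by omega : a + 1 ≤ r + 1)]
    simp only [Nat.add_sub_cancel]
    have e2 : hbf13 Mr Nr a c * bbf13 Sr c c = 0 := by rw [bbf_self13, mul_zero]
    have e4 : hbf13 Mr Nr a a * bbf13 Sr a c
        = (1/2 : ℚ) • (-(Srᵀ ^ (a - c - 1) + Srᵀ ^ (a - c))) := by
      rw [hbf_eq, bbf13, if_neg (by omega), if_neg (by omega), mul_smul_comm, neg_mul,
        hK2 (a - c) (by omega)]
    rw [e2, e4, gf013, gfc13, gfr13 _ hc hR hT, gf_ge13 _ (le_of_lt hac),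
      gf_ge13 _ (by omega : c ≤ a - 1)]
    have hx : a - 1 - c = a - c - 1 := by omega
    rw [hx]
    module

theorem stmt_13 (r : ℕ) (hr : 2 ≤ r)
    (Nr Mr Sr : Matrix (Fin r) (Fin r) ℚ)
    (hNr : ∀ i j : Fin r, Nr i j = if i ≤ j then -1 else 0)
    (hMr : Mr = -Nrᵀ)
    (hSr : ∀ i j : Fin r, Sr i j =
      if (i : ℕ) + 1 = (j : ℕ) then 1
      else if (i : ℕ) = r - 1 ∧ (j : ℕ) = 0 then -1 else 0)
    (H : Matrix (Fin (r + 1) × Fin r) (Fin (r + 1) × Fin r) ℚ)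
    (hH : ∀ (α β : Fin (r + 1)) (j k : Fin r), H (α, j) (β, k) =
      if α = β then (-(Mr + Nr)) j k
      else if α < β then (1 : Matrix (Fin r) (Fin r) ℚ) j k
      else (-1 : Matrix (Fin r) (Fin r) ℚ) j k) :
    IsUnit H.det ∧
    (∀ (α : Fin (r + 1)) (j k : Fin r), H⁻¹ (α, j) (α, k) = 0) ∧
    (∀ (α β : Fin (r + 1)) (j k : Fin r), β < α →
      H⁻¹ (α, j) (β, k) =
        ((1 / 2 : ℚ) • ((Srᵀ) ^ ((α : ℕ) - (β : ℕ) - 1) - (Srᵀ) ^ ((α : ℕ) - (β : ℕ)))) j k) ∧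
    (∀ (α β : Fin (r + 1)) (j k : Fin r), α < β →
      H⁻¹ (α, j) (β, k) =
        ((1 / 2 : ℚ) • (Sr ^ ((β : ℕ) - (α : ℕ)) - Sr ^ ((β : ℕ) - (α : ℕ) - 1))) j k) := by
  have h1 : Sr * Srᵀ = 1 := aux_mulT13 hr Sr hSr
  have hR : Sr ^ r = -1 := aux_powr13 hr Sr (aux_pow13 hr Sr hSr)
  have hT := aux_T13 Sr h1 hR
  have hA := aux_A13 Mr Nr hNr hMr
  have hk1 : (Mr + Nr) * (Sr - 1) = 1 + Sr :=
    aux_key113 hr Sr Mr Nr (aux_col13 hr Sr hSr) hA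
  have hk2 : (Mr + Nr) * (1 - Srᵀ) = 1 + Srᵀ := aux_key213 Sr Mr Nr h1 hk1
  have hK1 := keyS13 Sr Mr Nr hk1
  have hK2 := keyT13 Sr Mr Nr hk2
  -- entry description of H
  have hHb : ∀ (α β : Fin (r + 1)) (j l : Fin r),
      H (α, j) (β, l) = hbf13 Mr Nr (α : ℕ) (β : ℕ) j l := by
    intro α β j l
    rw [hH, hbf13]
    rcases eq_or_ne α β with h | h
    · subst h; rw [if_pos rfl, if_pos rfl]
    · rw [if_neg h, if_neg (fun hc : (β : ℕ) = (α : ℕ) => h (Fin.ext hc.symm))]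
      rcases lt_or_gt_of_ne h with h' | h'
      · rw [if_pos h', if_pos (show (α : ℕ) < (β : ℕ) from h')]
      · have hv : (β : ℕ) < (α : ℕ) := h'
        rw [if_neg (show ¬ α < β by omega), if_neg (by omega)]
  -- right inverse
  have hHB : H * (Matrix.of fun p q : Fin (r + 1) × Fin r =>
      bbf13 Sr (p.1 : ℕ) (q.1 : ℕ) p.2 q.2) = 1 := by
    ext ⟨α, j⟩ ⟨γ, k⟩
    rw [mul_apply, Fintype.sum_prod_type]
    have hin : ∀ β : Fin (r + 1),
        (∑ l : Fin r, H (α, j) (β, l) * (Matrix.of fun p q : Fin (r + 1) × Fin r =>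
          bbf13 Sr (p.1 : ℕ) (q.1 : ℕ) p.2 q.2) (β, l) (γ, k))
        = (hbf13 Mr Nr (α : ℕ) (β : ℕ) * bbf13 Sr (β : ℕ) (γ : ℕ)) j k := by
      intro β
      rw [mul_apply]
      exact Finset.sum_congr rfl fun l _ => by rw [hHb, Matrix.of_apply]
    rw [Finset.sum_congr rfl fun β _ => hin β, ← Matrix.sum_apply,
      Fin.sum_univ_eq_sum_range (fun m => hbf13 Mr Nr (α : ℕ) m * bbf13 Sr m (γ : ℕ)) (r + 1),
      mainsum13 hr Sr Mr Nr hR hT hK1 hK2 (α : ℕ) (γ : ℕ) (by omega) (by omega)]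
    by_cases h : α = γ
    · subst h
      rw [if_pos rfl, one_apply, one_apply]
      by_cases hjk : j = k
      · subst hjk; rw [if_pos rfl, if_pos rfl]
      · rw [if_neg hjk, if_neg (fun hc => hjk (congrArg Prod.snd hc))]
    · rw [if_neg (fun hc : (α : ℕ) = (γ : ℕ) => h (Fin.ext hc)),
        one_apply_ne (fun hc => h (congrArg Prod.fst hc))]
      rfl
  have hdet : IsUnit H.det := Matrix.isUnit_det_of_right_inverse hHB
  have hinv := Matrix.inv_eq_right_inv hHB
  refine ⟨hdet, ?_, ?_, ?_⟩
  · intro α j k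
    rw [hinv]
    show bbf13 Sr (α : ℕ) (α : ℕ) j k = 0
    rw [bbf_self13]
    rfl
  · intro α β j k hba
    rw [hinv]
    show bbf13 Sr (α : ℕ) (β : ℕ) j k = _
    have hv : (β : ℕ) < (α : ℕ) := hba
    rw [bbf13, if_neg (by omega), if_neg (by omega)]
  · intro α β j k hab
    rw [hinv]
    show bbf13 Sr (α : ℕ) (β : ℕ) j k = _
    have hv : (α : ℕ) < (β : ℕ) := hab
    rw [bbf13, if_neg (by omega), if_pos hv]
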